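/- Let X be an N-way real tensor of size I_1 × ⋯ × I_N, let λ ∈ ℝ^r and A_n ∈ ℝ^{I_n × r} for each mode n ∈ {1,…,N} (with no tying between modes), and let M be the Kruskal tensor with entries m_i = ∑_{j=1}^r λ_j ∏_{n=1}^N (A_n)_{i_n, j}. Let ℓ : ℝ × ℝ → ℝ be such that for every x ∈ ℝ the map m ↦ ℓ(x, m) is differentiable on ℝ with derivative ∂ℓ/∂m(x, m), and define G(λ, A_1,…,A_N) = ∑_i ℓ(x_i, m_i). Then: (1) for every b ∈ {1,…,r}, the partial derivative of G with respect to λ_b exists and equals ∑_i y_i ∏_{n=1}^N (A_n)_{i_n, b}; and (2) for every mode k ∈ {1,…,N}, every a ∈ {1,…,I_k}, and every b ∈ {1,…,r}, the partial derivative of G with respect to the (a,b) entry of A_k exists and equals ∑_{i : i_k = a} y_i · λ_b · ∏_{n ≠ k} (A_n)_{i_n, b}, where y_i = ∂ℓ/∂m(x_i, m_i). -/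

import Mathlib

open Finset

/-- **Nonsymmetric GCP gradients.**
For the GCP objective `G(λ, A_1,…,A_N) = ∑_i ℓ(x_i, m_i)` with the (nonsymmetric)
Kruskal model `m_i = ∑_j λ_j ∏_n (A_n)_{i_n, j}`:
(1) the partial derivative with respect to `λ_b` exists and equals
`∑_i y_i ∏_n (A_n)_{i_n, b}`; and
(2) the partial derivative with respect to the `(a,b)` entry of `A_k` exists and equals
`∑_{i : i_k = a} y_i · λ_b · ∏_{n ≠ k} (A_n)_{i_n, b}`,
where `y_i = ∂ℓ/∂m (x_i, m_i)`. -/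
theorem gcp_gradients
    (N r : ℕ) (Ilen : Fin N → ℕ)
    (X : ((n : Fin N) → Fin (Ilen n)) → ℝ)
    (lam : Fin r → ℝ) (A : (n : Fin N) → Fin (Ilen n) → Fin r → ℝ)
    (ℓ : ℝ → ℝ → ℝ) (dℓ : ℝ → ℝ → ℝ)
    (hℓ : ∀ x m : ℝ, HasDerivAt (fun z => ℓ x z) (dℓ x m) m) :
    (∀ b : Fin r,
      HasDerivAt
        (fun t : ℝ => ∑ i : (n : Fin N) → Fin (Ilen n),
          ℓ (X i) (∑ j : Fin r, Function.update lam b t j * ∏ n : Fin N, A n (i n) j))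
        (∑ i : (n : Fin N) → Fin (Ilen n),
          dℓ (X i) (∑ j : Fin r, lam j * ∏ n : Fin N, A n (i n) j) *
            ∏ n : Fin N, A n (i n) b)
        (lam b))
    ∧ (∀ (k : Fin N) (a : Fin (Ilen k)) (b : Fin r),
      HasDerivAt
        (fun t : ℝ => ∑ i : (n : Fin N) → Fin (Ilen n),
          ℓ (X i) (∑ j : Fin r, lam j *
            ∏ n : Fin N,
              (Function.update A k (fun a' b' => if a' = a ∧ b' = b then t else A k a' b'))
                n (i n) j))
        (∑ i ∈ Finset.univ.filter (fun i : (n : Fin N) → Fin (Ilen n) => i k = a),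
          dℓ (X i) (∑ j : Fin r, lam j * ∏ n : Fin N, A n (i n) j) *
            (lam b * ∏ n ∈ Finset.univ.erase k, A n (i n) b))
        (A k a b)) := by
  constructor
  · intro b
    have key : ∀ i : (n : Fin N) → Fin (Ilen n),
        HasDerivAt
          (fun t : ℝ => ℓ (X i) (∑ j : Fin r, Function.update lam b t j * ∏ n : Fin N, A n (i n) j))
          (dℓ (X i) (∑ j : Fin r, lam j * ∏ n : Fin N, A n (i n) j) * ∏ n : Fin N, A n (i n) b)
          (lam b) := by
      intro i
      have hin : HasDerivAt
          (fun t : ℝ => ∑ j : Fin r, Function.update lam b t j * ∏ n : Fin N, A n (i n) j)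
          (∏ n : Fin N, A n (i n) b) (lam b) := by
        have h1 : HasDerivAt
            (fun t : ℝ => ∑ j : Fin r, Function.update lam b t j * ∏ n : Fin N, A n (i n) j)
            (∑ j : Fin r, if j = b then ∏ n : Fin N, A n (i n) j else 0) (lam b) := by
          apply HasDerivAt.fun_sum
          intro j _
          by_cases hj : j = b
          · subst hj
            simp only [Function.update_self, if_pos rfl]
            simpa using (hasDerivAt_id (lam j)).mul_const (∏ n : Fin N, A n (i n) j)
          · simp only [Function.update_of_ne hj, if_neg hj]
            exact hasDerivAt_const _ _
        simpa using h1
      have hval : (∑ j : Fin r, Function.update lam b (lam b) j * ∏ n : Fin N, A n (i n) j)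
          = ∑ j : Fin r, lam j * ∏ n : Fin N, A n (i n) j := by
        simp
      have hl' : HasDerivAt (fun z => ℓ (X i) z)
          (dℓ (X i) (∑ j : Fin r, lam j * ∏ n : Fin N, A n (i n) j))
          (∑ j : Fin r, Function.update lam b (lam b) j * ∏ n : Fin N, A n (i n) j) :=
        hval ▸ hℓ (X i) (∑ j : Fin r, lam j * ∏ n : Fin N, A n (i n) j)
      have := hl'.comp (lam b) hin
      simpa [Function.comp_def] using this
    exact HasDerivAt.fun_sum (fun i _ => key i)
  · intro k a b
    set D : ((n : Fin N) → Fin (Ilen n)) → Fin r → ℝ :=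
      fun i j => ∏ n ∈ Finset.univ.erase k, A n (i n) j with hD
    have hprod : ∀ (t : ℝ) (i : (n : Fin N) → Fin (Ilen n)) (j : Fin r),
        (∏ n : Fin N,
          (Function.update A k (fun a' b' => if a' = a ∧ b' = b then t else A k a' b'))
            n (i n) j)
        = (if i k = a ∧ j = b then t else A k (i k) j) * D i j := by
      intro t i j
      rw [← Finset.mul_prod_erase _ _ (Finset.mem_univ k)]
      congr 1
      · simp
      · exact Finset.prod_congr rfl fun n hn => by
          rw [Function.update_of_ne (Finset.ne_of_mem_erase hn)]
    have key : ∀ i : (n : Fin N) → Fin (Ilen n),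
        HasDerivAt
          (fun t : ℝ => ℓ (X i) (∑ j : Fin r, lam j *
            ∏ n : Fin N,
              (Function.update A k (fun a' b' => if a' = a ∧ b' = b then t else A k a' b'))
                n (i n) j))
          (if i k = a then
            dℓ (X i) (∑ j : Fin r, lam j * ∏ n : Fin N, A n (i n) j) * (lam b * D i b)
           else 0)
          (A k a b) := by
      intro i
      have hin : HasDerivAt
          (fun t : ℝ => ∑ j : Fin r, lam j *
            ((if i k = a ∧ j = b then t else A k (i k) j) * D i j))
          (if i k = a then lam b * D i b else 0) (A k a b) := by
        have h1 : HasDerivAt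
            (fun t : ℝ => ∑ j : Fin r, lam j *
              ((if i k = a ∧ j = b then t else A k (i k) j) * D i j))
            (∑ j : Fin r, if i k = a ∧ j = b then lam j * D i j else 0) (A k a b) := by
          apply HasDerivAt.fun_sum
          intro j _
          by_cases hc : i k = a ∧ j = b
          · simp only [if_pos hc]
            simpa using ((hasDerivAt_id (A k a b)).mul_const (D i j)).const_mul (lam j)
          · simp only [if_neg hc]
            exact hasDerivAt_const _ _
        have : (∑ j : Fin r, if i k = a ∧ j = b then lam j * D i j else 0)
            = if i k = a then lam b * D i b else 0 := by
          by_cases h : i k = a <;> simp [h]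
        rwa [this] at h1
      have hval : (∑ j : Fin r, lam j *
          ((if i k = a ∧ j = b then A k a b else A k (i k) j) * D i j))
          = ∑ j : Fin r, lam j * ∏ n : Fin N, A n (i n) j := by
        have hA : ∀ j : Fin r, A k (i k) j * D i j = ∏ n : Fin N, A n (i n) j :=
          fun j => Finset.mul_prod_erase Finset.univ (fun n => A n (i n) j) (Finset.mem_univ k)
        refine Finset.sum_congr rfl fun j _ => ?_
        rw [← hA j]
        congr 2
        by_cases hc : i k = a ∧ j = b
        · rw [if_pos hc, hc.1, hc.2]
        · rw [if_neg hc]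
      have hl' : HasDerivAt (fun z => ℓ (X i) z)
          (dℓ (X i) (∑ j : Fin r, lam j * ∏ n : Fin N, A n (i n) j))
          (∑ j : Fin r, lam j *
            ((if i k = a ∧ j = b then A k a b else A k (i k) j) * D i j)) :=
        hval ▸ hℓ (X i) (∑ j : Fin r, lam j * ∏ n : Fin N, A n (i n) j)
      have hcomp := hl'.comp (A k a b) hin
      have hfe : (fun t : ℝ => ℓ (X i) (∑ j : Fin r, lam j *
            ∏ n : Fin N,
              (Function.update A k (fun a' b' => if a' = a ∧ b' = b then t else A k a' b'))
                n (i n) j))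
          = ((fun z => ℓ (X i) z) ∘ fun t : ℝ => ∑ j : Fin r, lam j *
              ((if i k = a ∧ j = b then t else A k (i k) j) * D i j)) := by
        funext t
        simp only [Function.comp, hprod t i]
      rw [hfe]
      by_cases h : i k = a
      · simpa [h, mul_left_comm, mul_assoc] using hcomp
      · rw [if_neg h]
        have hconst : ((fun z => ℓ (X i) z) ∘ fun t : ℝ => ∑ j : Fin r, lam j *
              ((if i k = a ∧ j = b then t else A k (i k) j) * D i j))
            = fun _ : ℝ => ℓ (X i) (∑ j : Fin r, lam j * (A k (i k) j * D i j)) := by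
          funext t
          show ℓ (X i) _ = _
          congr 1
          exact Finset.sum_congr rfl fun j _ => by simp [h]
        rw [hconst]
        exact hasDerivAt_const _ _
    have hsum := HasDerivAt.fun_sum (fun i (_ : i ∈ Finset.univ) => key i)
    rw [Finset.sum_filter]
    exact hsum
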